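/- Let R be a commutative local ring and M a finitely generated R-module. Then the trace ideal τ(M) equals R if and only if M has a nonzero free direct summand, i.e. M ≅ N ⊕ R for some R-module N. -/

import Mathlib

universe u v w

/-- The trace ideal of a module: the ideal generated by all images of maps `M →ₗ[R] R`. -/
def traceIdeal (R : Type u) (M : Type*) [CommRing R] [AddCommGroup M] [Module R M] :
    Ideal R :=
  ⨆ f : M →ₗ[R] R, LinearMap.range f

/-- Let `R` be a commutative local ring and `M` a finitely generated `R`-module.  Then the
trace ideal `τ(M)` equals `R` if and only if `M` has a nonzero free direct summand, i.e.
`M ≅ N ⊕ R` for some `R`-module `N`. -/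
theorem traceIdeal_eq_top_iff_free_summand (R : Type u) (M : Type v) [CommRing R]
    [IsLocalRing R] [AddCommGroup M] [Module R M] [Module.Finite R M] :
    traceIdeal R M = ⊤ ↔
      ∃ (N : Type v) (_ : AddCommGroup N) (_ : Module R N), Nonempty (M ≃ₗ[R] N × R) := by
  constructor
  · intro h
    -- find a surjective linear map f : M →ₗ R
    have hex : ∃ f : M →ₗ[R] R, LinearMap.range f = ⊤ := by
      by_contra hc
      push_neg at hc
      have : traceIdeal R M ≤ IsLocalRing.maximalIdeal R := by
        apply iSup_le
        intro f
        exact IsLocalRing.le_maximalIdeal (hc f)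
      rw [h] at this
      exact (IsLocalRing.maximalIdeal.isMaximal R).ne_top (top_le_iff.mp this)
    obtain ⟨f, hf⟩ := hex
    have hfs : Function.Surjective f := LinearMap.range_eq_top.mp hf
    -- split using projectivity of R
    obtain ⟨g, hg⟩ := Module.projective_lifting_property f LinearMap.id hfs
    have hginj : Function.Injective g := by
      intro a b hab
      have ha := LinearMap.congr_fun hg a
      have hb := LinearMap.congr_fun hg b
      simp only [LinearMap.comp_apply, LinearMap.id_apply] at ha hb
      rw [← ha, ← hb, hab]
    set p := LinearMap.range g with hp
    set h : M →ₗ[R] p := LinearMap.codRestrict p (g ∘ₗ f) (fun x => ⟨f x, rfl⟩) with hh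
    have hproj : ∀ x : p, h x = x := by
      rintro ⟨_, r, rfl⟩
      ext
      have := LinearMap.congr_fun hg r
      simp only [LinearMap.comp_apply, LinearMap.id_apply] at this
      exact congrArg g this
    have hc : IsCompl p (LinearMap.ker h) := LinearMap.isCompl_of_proj hproj
    have hker : LinearMap.ker h = LinearMap.ker f := by
      ext x
      simp only [LinearMap.mem_ker, hh, LinearMap.codRestrict_apply, Subtype.ext_iff,
        LinearMap.comp_apply, Submodule.coe_zero]
      constructor
      · intro hx
        have : g (f x) = g 0 := by rw [map_zero]; exact hx
        exact hginj this
      · intro hx; show g (f x) = 0; simp [hx]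
    rw [hker] at hc
    refine ⟨LinearMap.ker f, inferInstance, inferInstance, ⟨?_⟩⟩
    exact (Submodule.prodEquivOfIsCompl p (LinearMap.ker f) hc).symm.trans
      ((LinearEquiv.prodComm R p (LinearMap.ker f)).trans
        (LinearEquiv.prodCongr (LinearEquiv.refl R (LinearMap.ker f))
          (LinearEquiv.ofInjective g hginj).symm))
  · rintro ⟨N, _, _, ⟨e⟩⟩
    apply top_le_iff.mp
    intro x _
    have : x ∈ LinearMap.range ((LinearMap.snd R N R).comp e.toLinearMap) := by
      exact ⟨e.symm (0, x), by simp⟩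
    exact (le_iSup (fun f : M →ₗ[R] R => LinearMap.range f) _) this
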